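/- Let h(x) = Σᵢ xᵢ log xᵢ be the Boltzmann–Shannon entropy on ℝⁿ₊, a > 0, η > 0, and ã = log a + 1. Then the n-dimensional Bregman proximity operator factorizes coordinatewise and satisfies Prox^h_{η‖·−a𝟙‖₁} = ∇h^* ∘ Prox_{η‖·−ã𝟙‖₁} ∘ ∇h on ℝⁿ₊₊, where [∇h(x)]ᵢ = log xᵢ + 1, [∇h^*(u)]ᵢ = e^{uᵢ−1}, and Prox_{η‖·−ã𝟙‖₁}(u) has i-th coordinate ã + soft_η(uᵢ − ã). -/

import Mathlib

/-- Entropy strict inequality: t log q + t - q < t log t for t ≥ 0, q > 0, t ≠ q. -/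
lemma ent_lt (q t : ℝ) (hq : 0 < q) (ht : 0 ≤ t) (hne : t ≠ q) :
    t * Real.log q + t - q < t * Real.log t := by
  rcases ht.eq_or_lt with h | h
  · rw [← h]; simp; linarith
  · have hqt : q / t ≠ 1 := by
      intro hh
      apply hne
      field_simp at hh
      linarith
    have h1 : Real.log (q / t) < q / t - 1 :=
      Real.log_lt_sub_one_of_pos (by positivity) hqt
    have h2 : Real.log (q / t) = Real.log q - Real.log t := Real.log_div hq.ne' h.ne'
    have h3 : t * (q / t - 1) = q - t := by field_simp
    nlinarith [mul_lt_mul_of_pos_left h1 h]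

/-- Scalar Bregman prox optimality: q = exp(log a + soft) minimizes
  η|t-a| + t log t - u t over t ≥ 0, strictly if t ≠ q. -/
lemma scalar_min (a η u t q : ℝ) (ha : 0 < a) (hη : 0 < η) (ht : 0 ≤ t)
    (hq : q = Real.exp (Real.log a +
      Real.sign (u - (Real.log a + 1)) * max (|u - (Real.log a + 1)| - η) 0)) :
    (η * |q - a| + (q * Real.log q - u * q) ≤ η * |t - a| + (t * Real.log t - u * t)) ∧
    (t ≠ q → η * |q - a| + (q * Real.log q - u * q) < η * |t - a| + (t * Real.log t - u * t)) := by
  set w := u - (Real.log a + 1) with hw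
  have hqpos : 0 < q := hq ▸ Real.exp_pos _
  have hlq : Real.log q = Real.log a + Real.sign w * max (|w| - η) 0 := by
    rw [hq, Real.log_exp]
  have hB : 0 ≤ η * (|t - a| - |q - a|) + (Real.log q + 1 - u) * (t - q) := by
    rcases le_or_gt (|w|) η with hcase | hcase
    · have hm : max (|w| - η) 0 = 0 := max_eq_right (by linarith)
      have hqa : q = a := by rw [hq, hm, mul_zero, add_zero, Real.exp_log ha]
      have h1 : Real.log q + 1 - u = -w := by rw [hlq, hm, mul_zero, hw]; ring
      have habs : w * (t - a) ≤ η * |t - a| := by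
        calc w * (t - a) ≤ |w * (t - a)| := le_abs_self _
          _ = |w| * |t - a| := abs_mul _ _
          _ ≤ η * |t - a| := mul_le_mul_of_nonneg_right hcase (abs_nonneg _)
      rw [h1, hqa]
      simp only [sub_self, abs_zero]
      nlinarith
    · rcases lt_trichotomy w 0 with hwn | hw0 | hwp
      · -- w < 0, |w| = -w > η
        have hsign : Real.sign w = -1 := Real.sign_of_neg hwn
        have habsw : |w| = -w := abs_of_neg hwn
        have hm : max (|w| - η) 0 = -w - η := by
          rw [habsw]; exact max_eq_left (by linarith [habsw ▸ hcase])
        have hlq' : Real.log q = Real.log a + (w + η) := by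
          rw [hlq, hsign, hm]; ring
        have hqa : q < a := by
          rw [hq, hsign, hm]
          nth_rewrite 2 [← Real.exp_log ha]
          apply Real.exp_lt_exp.2
          have : η < -w := by rw [← habsw]; exact hcase
          nlinarith
        have h1 : Real.log q + 1 - u = η := by rw [hlq', hw]; ring
        have h2 : |q - a| = -(q - a) := abs_of_neg (by linarith)
        rw [h1, h2]
        nlinarith [neg_abs_le (t - a), mul_le_mul_of_nonneg_left (neg_le_abs (t - a)) hη.le]
      · rw [hw0] at hcase; simp at hcase; linarith
      · -- w > 0, |w| = w > η
        have hsign : Real.sign w = 1 := Real.sign_of_pos hwp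
        have habsw : |w| = w := abs_of_pos hwp
        have hm : max (|w| - η) 0 = w - η := by
          rw [habsw]; exact max_eq_left (by linarith [habsw ▸ hcase])
        have hlq' : Real.log q = Real.log a + (w - η) := by
          rw [hlq, hsign, hm]; ring
        have hqa : a < q := by
          rw [hq, hsign, hm, one_mul]
          nth_rewrite 1 [← Real.exp_log ha]
          apply Real.exp_lt_exp.2
          have : η < w := habsw ▸ hcase
          linarith
        have h1 : Real.log q + 1 - u = -η := by rw [hlq', hw]; ring
        have h2 : |q - a| = q - a := abs_of_pos (by linarith)
        rw [h1, h2]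
        nlinarith [le_abs_self (t - a), mul_le_mul_of_nonneg_left (le_abs_self (t - a)) hη.le]
  have strict : t ≠ q →
      η * |q - a| + (q * Real.log q - u * q) < η * |t - a| + (t * Real.log t - u * t) := by
    intro hne
    have hA := ent_lt q t hqpos ht hne
    nlinarith [hB, hA]
  refine ⟨?_, strict⟩
  rcases eq_or_ne t q with rfl | hne
  · exact le_rfl
  · exact (strict hne).le

theorem stmt19 (n : ℕ) (a η : ℝ) (ha : 0 < a) (hη : 0 < η)
    (x : Fin n → ℝ) (hx : ∀ i, 0 < x i) :
    let atil : ℝ := Real.log a + 1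
    let soft : ℝ → ℝ → ℝ := fun η v => Real.sign v * max (|v| - η) 0
    let q : Fin n → ℝ := fun i =>
      Real.exp ((atil + soft η ((Real.log (x i) + 1) - atil)) - 1)
    let F : (Fin n → ℝ) → ℝ := fun ξ =>
      η * (∑ i, |ξ i - a|) +
        ∑ i, (ξ i * Real.log (ξ i) - x i * Real.log (x i) -
          (Real.log (x i) + 1) * (ξ i - x i))
    (∀ ξ : Fin n → ℝ, (∀ i, 0 ≤ ξ i) → F q ≤ F ξ) ∧
    (∀ ξ : Fin n → ℝ, (∀ i, 0 ≤ ξ i) → F ξ ≤ F q → ξ = q) := by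
  intro atil soft q F
  have hqdef : ∀ i, q i = Real.exp (Real.log a +
      Real.sign ((Real.log (x i) + 1) - (Real.log a + 1)) *
        max (|(Real.log (x i) + 1) - (Real.log a + 1)| - η) 0) := by
    intro i
    show Real.exp _ = Real.exp _
    congr 1
    simp only [atil, soft]
    ring
  have key : ∀ i, ∀ t : ℝ, 0 ≤ t →
      (η * |q i - a| + (q i * Real.log (q i) - (Real.log (x i) + 1) * q i) ≤
        η * |t - a| + (t * Real.log t - (Real.log (x i) + 1) * t)) ∧
      (t ≠ q i → η * |q i - a| + (q i * Real.log (q i) - (Real.log (x i) + 1) * q i) <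
        η * |t - a| + (t * Real.log t - (Real.log (x i) + 1) * t)) :=
    fun i t ht => scalar_min a η (Real.log (x i) + 1) t (q i) ha hη ht (hqdef i)
  have hF : ∀ ξ : Fin n → ℝ, F ξ =
      (∑ i, (η * |ξ i - a| + (ξ i * Real.log (ξ i) - (Real.log (x i) + 1) * ξ i))) +
        ∑ i, ((Real.log (x i) + 1) * x i - x i * Real.log (x i)) := by
    intro ξ
    show η * (∑ i, |ξ i - a|) + _ = _
    rw [Finset.mul_sum, ← Finset.sum_add_distrib, ← Finset.sum_add_distrib]
    apply Finset.sum_congr rfl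
    intros; ring
  have hqnn : ∀ i, 0 ≤ q i := fun i => (Real.exp_pos _).le
  constructor
  · intro ξ hξ
    rw [hF, hF]
    refine add_le_add ?_ le_rfl
    exact Finset.sum_le_sum fun i _ => (key i (ξ i) (hξ i)).1
  · intro ξ hξ hle
    funext i
    by_contra hne
    have hlt : F q < F ξ := by
      rw [hF, hF]
      refine add_lt_add_of_lt_of_le ?_ le_rfl
      exact Finset.sum_lt_sum (fun j _ => (key j (ξ j) (hξ j)).1)
        ⟨i, Finset.mem_univ i, (key i (ξ i) (hξ i)).2 hne⟩
    linarith
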